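/- (Theorem 1 together with Proposition 2) In a hedonic coalitional game on a finite player set N, for every initial partition Π_init there exists a finite sequence Π_init = Π_0, Π_1, …, Π_T of partitions in which each Π_{l+1} results from Π_l by an admissible join operation, and the final partition Π_T is Nash-stable (no admissible join operation can be performed from Π_T). -/

import Mathlib

open Finset

variable {ι : Type*}

/-- A partition of the finite player set: pairwise disjoint nonempty coalitions covering everyone. -/
def IsPartition [DecidableEq ι] [Fintype ι] (P : Finset (Finset ι)) : Prop :=
  (∀ S ∈ P, S.Nonempty) ∧
  (∀ S ∈ P, ∀ T ∈ P, S ≠ T → Disjoint S T) ∧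
  P.biUnion id = Finset.univ

/-- The value of a coalition: v(S) = ∑_{j ∈ S} φ_j(S). -/
def coalitionValue (φ : Finset ι → ι → ℝ) (S : Finset ι) : ℝ := ∑ j ∈ S, φ S j

/-- Total social welfare of a partition: W(Π) = ∑_{S ∈ Π} v(S). -/
def welfare (φ : Finset ι → ι → ℝ) (P : Finset (Finset ι)) : ℝ :=
  ∑ S ∈ P, coalitionValue φ S

/-- `JoinStep φ P P'` : the partition `P'` results from `P` by an admissible join operation:
a player `i` moves from its coalition `Sm ∈ P` to a coalition `Sk ∈ P ∪ {∅}`, `Sk ≠ Sm`,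
with `v(Sk ∪ {i}) + v(Sm \ {i}) > v(Sk) + v(Sm)`; empty sets are removed from the result. -/
def JoinStep [DecidableEq ι] (φ : Finset ι → ι → ℝ) (P P' : Finset (Finset ι)) : Prop :=
  ∃ (i : ι) (Sm Sk : Finset ι),
    Sm ∈ P ∧ i ∈ Sm ∧ (Sk ∈ P ∨ Sk = ∅) ∧ Sk ≠ Sm ∧
    coalitionValue φ Sk + coalitionValue φ Sm <
      coalitionValue φ (insert i Sk) + coalitionValue φ (Sm.erase i) ∧
    P' = ((P \ {Sm, Sk}) ∪ {Sm.erase i, insert i Sk}).erase ∅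

lemma coalitionValue_empty (φ : Finset ι → ι → ℝ) : coalitionValue φ (∅ : Finset ι) = 0 := by
  simp [coalitionValue]

lemma joinStep_facts [DecidableEq ι] [Fintype ι] (φ : Finset ι → ι → ℝ)
    {P P' : Finset (Finset ι)} (hP : IsPartition P) (h : JoinStep φ P P') :
    IsPartition P' ∧ welfare φ P < welfare φ P' := by
  obtain ⟨hne0, hdisj, hcov⟩ := hP
  obtain ⟨i, Sm, Sk, hSm, hiSm, hSk, hkm, hval, hP'⟩ := h
  have hemptyP : (∅ : Finset ι) ∉ P := fun hc => by
    simpa using hne0 ∅ hc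
  have hdisjkm : Disjoint Sk Sm := by
    rcases hSk with hSk | rfl
    · exact hdisj Sk hSk Sm hSm hkm
    · simp
  have hiSk : i ∉ Sk := fun hc => (Finset.disjoint_left.mp hdisjkm hc) hiSm
  set e : Finset ι := Sm.erase i with he
  set j : Finset ι := insert i Sk with hj
  set Q : Finset (Finset ι) := P \ {Sm, Sk} with hQ
  have hQmem : ∀ T ∈ Q, T ∈ P ∧ T ≠ Sm ∧ T ≠ Sk := by
    intro T hT
    simp only [hQ, Finset.mem_sdiff, Finset.mem_insert, Finset.mem_singleton] at hT
    tauto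
  have hQdisjSm : ∀ T ∈ Q, Disjoint T Sm := by
    intro T hT
    obtain ⟨hTP, hTm, _⟩ := hQmem T hT
    exact hdisj T hTP Sm hSm hTm
  have hQdisjSk : ∀ T ∈ Q, Disjoint T Sk := by
    intro T hT
    obtain ⟨hTP, _, hTk⟩ := hQmem T hT
    rcases hSk with hSk | rfl
    · exact hdisj T hTP Sk hSk hTk
    · simp
  have heQ : e ∉ Q := by
    intro hc
    have hd := hQdisjSm e hc
    have hene : e.Nonempty := hne0 e (hQmem e hc).1
    obtain ⟨x, hx⟩ := hene
    exact (Finset.disjoint_left.mp hd hx) (Finset.mem_of_mem_erase hx)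
  have hjQ : j ∉ Q := by
    intro hc
    have hd := hQdisjSm j hc
    exact (Finset.disjoint_left.mp hd (Finset.mem_insert_self i Sk)) hiSm
  have hej : e ≠ j := by
    intro hc
    have : i ∈ e := hc ▸ Finset.mem_insert_self i Sk
    exact (Finset.notMem_erase i Sm) this
  have hdej : Disjoint e j := by
    rw [hj, Finset.disjoint_insert_right]
    exact ⟨Finset.notMem_erase i Sm,
      Finset.disjoint_of_subset_left (Finset.erase_subset i Sm) hdisjkm.symm⟩
  -- welfare of P
  have hwP : welfare φ P = (∑ S ∈ Q, coalitionValue φ S)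
      + coalitionValue φ Sm + coalitionValue φ Sk := by
    rcases hSk with hSkP | rfl
    · have hsub : ({Sm, Sk} : Finset (Finset ι)) ⊆ P := by
        intro T hT
        simp only [Finset.mem_insert, Finset.mem_singleton] at hT
        rcases hT with rfl | rfl <;> assumption
      have := Finset.sum_sdiff (f := coalitionValue φ) hsub
      rw [welfare, ← this, Finset.sum_pair (Ne.symm hkm)]
      ring
    · have hQ' : Q = P.erase Sm := by
        rw [hQ]
        ext T
        simp only [Finset.mem_sdiff, Finset.mem_erase, Finset.mem_insert,
          Finset.mem_singleton]
        constructor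
        · rintro ⟨hTP, hT⟩; push_neg at hT; exact ⟨hT.1, hTP⟩
        · rintro ⟨hTm, hTP⟩
          refine ⟨hTP, ?_⟩
          push_neg
          exact ⟨hTm, hne0 T hTP⟩
      rw [coalitionValue_empty, hQ', welfare,
        ← Finset.add_sum_erase (f := coalitionValue φ) P hSm]
      ring
  -- welfare of P'
  have hwP' : welfare φ P' = (∑ S ∈ Q, coalitionValue φ S)
      + coalitionValue φ e + coalitionValue φ j := by
    have h1 : welfare φ P' = welfare φ (Q ∪ {e, j}) := by
      rw [hP', welfare, welfare, Finset.sum_erase _ (coalitionValue_empty φ)]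
    have hdQ : Disjoint Q ({e, j} : Finset (Finset ι)) := by
      rw [Finset.disjoint_insert_right, Finset.disjoint_singleton_right]
      exact ⟨heQ, hjQ⟩
    rw [h1, welfare, Finset.sum_union hdQ, Finset.sum_pair hej]
    ring
  have hw : welfare φ P < welfare φ P' := by
    rw [hwP, hwP']
    have := hval
    linarith
  refine ⟨⟨?_, ?_, ?_⟩, hw⟩
  · intro S hS
    rw [hP'] at hS
    exact Finset.nonempty_iff_ne_empty.mpr (Finset.ne_of_mem_erase hS)
  · intro S hS T hT hST
    rw [hP'] at hS hT
    have hS' := Finset.mem_of_mem_erase hS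
    have hT' := Finset.mem_of_mem_erase hT
    simp only [Finset.mem_union, Finset.mem_insert, Finset.mem_singleton] at hS' hT'
    have key : ∀ U, U ∈ Q ∨ U = e ∨ U = j → ∀ V, V ∈ Q ∨ V = e ∨ V = j →
        U ≠ V → Disjoint U V := by
      intro U hU V hV hUV
      rcases hU with hU | rfl | rfl <;> rcases hV with hV | rfl | rfl
      · exact hdisj U (hQmem U hU).1 V (hQmem V hV).1 hUV
      · exact Finset.disjoint_of_subset_right (Finset.erase_subset i Sm) (hQdisjSm U hU)
      · rw [hj, Finset.disjoint_insert_right]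
        exact ⟨fun hc => Finset.disjoint_left.mp (hQdisjSm U hU) hc hiSm, hQdisjSk U hU⟩
      · exact (Finset.disjoint_of_subset_right (Finset.erase_subset i Sm)
          (hQdisjSm V hV)).symm
      · exact absurd rfl hUV
      · exact hdej
      · exact ((Finset.disjoint_insert_right.mpr
          ⟨fun hc => Finset.disjoint_left.mp (hQdisjSm V hV) hc hiSm,
            hQdisjSk V hV⟩) :  Disjoint V j).symm
      · exact hdej.symm
      · exact absurd rfl hUV
    exact key S hS' T hT' hST
  · apply Finset.Subset.antisymm
    · intro x _; exact Finset.mem_univ x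
    · intro x _
      have : x ∈ P.biUnion id := hcov ▸ Finset.mem_univ x
      obtain ⟨T, hTP, hxT⟩ := Finset.mem_biUnion.mp this
      simp only [id] at hxT
      have mem_P' : ∀ U : Finset ι, (U ∈ Q ∨ U = e ∨ U = j) → U ≠ ∅ → U ∈ P' := by
        intro U hU hUne
        rw [hP']
        refine Finset.mem_erase.mpr ⟨hUne, ?_⟩
        rcases hU with hU | rfl | rfl
        · exact Finset.mem_union_left _ hU
        · exact Finset.mem_union_right _ (by simp)
        · exact Finset.mem_union_right _ (by simp)
      rcases eq_or_ne T Sm with rfl | hTm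
      · rcases eq_or_ne x i with rfl | hxi
        · refine Finset.mem_biUnion.mpr ⟨j, mem_P' j (by tauto) ?_, by simp [hj]⟩
          simp [hj]
        · refine Finset.mem_biUnion.mpr ⟨e, mem_P' e (by tauto) ?_, ?_⟩
          · intro hc
            have : x ∈ e := Finset.mem_erase.mpr ⟨hxi, hxT⟩
            rw [hc] at this; simp at this
          · simp only [id]; exact Finset.mem_erase.mpr ⟨hxi, hxT⟩
      · rcases eq_or_ne T Sk with rfl | hTk
        · refine Finset.mem_biUnion.mpr ⟨j, mem_P' j (by tauto) (by simp [hj]), ?_⟩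
          simp only [id, hj]
          exact Finset.mem_insert_of_mem hxT
        · have hTQ : T ∈ Q := by
            rw [hQ]
            simp only [Finset.mem_sdiff, Finset.mem_insert, Finset.mem_singleton]
            exact ⟨hTP, by tauto⟩
          refine Finset.mem_biUnion.mpr ⟨T, mem_P' T (by tauto) ?_, hxT⟩
          exact Finset.nonempty_iff_ne_empty.mp (hne0 T hTP)
open scoped Classical in
lemma exists_chain_aux [DecidableEq ι] [Fintype ι] (φ : Finset ι → ι → ℝ) :
    ∀ n (P : Finset (Finset ι)), IsPartition P →
      (Finset.univ.filter
        (fun Q => IsPartition Q ∧ welfare φ P < welfare φ Q)).card ≤ n →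
      ∃ (T : ℕ) (f : ℕ → Finset (Finset ι)),
        f 0 = P ∧
        (∀ l < T, JoinStep φ (f l) (f (l + 1))) ∧
        (∀ P', ¬ JoinStep φ (f T) P') := by
  intro n
  induction n with
  | zero =>
    intro P hP hcard
    by_cases h : ∃ P', JoinStep φ P P'
    · obtain ⟨P', hstep⟩ := h
      obtain ⟨hP', hw⟩ := joinStep_facts φ hP hstep
      exfalso
      have : P' ∈ Finset.univ.filter
          (fun Q => IsPartition Q ∧ welfare φ P < welfare φ Q) := by
        simp [hP', hw]
      have := Finset.card_pos.mpr ⟨P', this⟩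
      omega
    · push_neg at h
      exact ⟨0, fun _ => P, rfl, fun l hl => absurd hl (by omega), h⟩
  | succ n ih =>
    intro P hP hcard
    by_cases h : ∃ P', JoinStep φ P P'
    · obtain ⟨P', hstep⟩ := h
      obtain ⟨hP', hw⟩ := joinStep_facts φ hP hstep
      have hssub : Finset.univ.filter
            (fun Q => IsPartition Q ∧ welfare φ P' < welfare φ Q) ⊂
          Finset.univ.filter
            (fun Q => IsPartition Q ∧ welfare φ P < welfare φ Q) := by
        constructor
        · intro Q hQ
          simp only [Finset.mem_filter] at hQ ⊢
          exact ⟨hQ.1, hQ.2.1, lt_trans hw hQ.2.2⟩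
        · intro hc
          have hmem : P' ∈ Finset.univ.filter
              (fun Q => IsPartition Q ∧ welfare φ P < welfare φ Q) := by
            simp [hP', hw]
          have := (hc hmem)
          simp only [Finset.mem_filter] at this
          exact lt_irrefl _ this.2.2
      have hcard' : (Finset.univ.filter
          (fun Q => IsPartition Q ∧ welfare φ P' < welfare φ Q)).card ≤ n := by
        have := Finset.card_lt_card hssub
        omega
      obtain ⟨T, g, hg0, hgstep, hglast⟩ := ih P' hP' hcard'
      refine ⟨T + 1, fun l => if l = 0 then P else g (l - 1), by simp, ?_, ?_⟩
      · intro l hl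
        rcases Nat.eq_zero_or_pos l with rfl | hlpos
        · simpa [hg0] using hstep
        · have h1 : l ≠ 0 := by omega
          have h2 : l + 1 ≠ 0 := by omega
          simp only [h1, h2, if_false]
          have : l - 1 + 1 = l + 1 - 1 := by omega
          rw [← this]
          exact hgstep (l - 1) (by omega)
      · simpa using hglast
    · push_neg at h
      exact ⟨0, fun _ => P, rfl, fun l hl => absurd hl (by omega), h⟩

/-- Theorem 1 + Proposition 2: from any initial partition there is a finite sequence of
admissible join operations ending in a Nash-stable partition (no admissible join possible). -/
theorem converges_to_nash_stable [DecidableEq ι] [Fintype ι]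
    (φ : Finset ι → ι → ℝ) (Pinit : Finset (Finset ι)) (hPinit : IsPartition Pinit) :
    ∃ (T : ℕ) (f : ℕ → Finset (Finset ι)),
      f 0 = Pinit ∧
      (∀ l < T, JoinStep φ (f l) (f (l + 1))) ∧
      (∀ P', ¬ JoinStep φ (f T) P') := by
  classical
  exact exists_chain_aux φ _ Pinit hPinit le_rfl
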